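/- Let h be a value operator on ℝ^S × ℳ with contraction constant α ∈ [0,1) and ℳ nonempty and compact, and let H(𝒱) = { h(V,m) : V ∈ 𝒱, m ∈ ℳ }. Then H is an α-contraction on the space of nonempty compact subsets of ℝ^S equipped with the Hausdorff distance, i.e., d_H(H(𝒱), H(𝒲)) ≤ α·d_H(𝒱, 𝒲) for all nonempty compact 𝒱, 𝒲 ⊆ ℝ^S, and consequently there is a unique nonempty compact set 𝒱* ⊆ ℝ^S with H(𝒱*) = 𝒱*. -/

import Mathlib

/-- The space of MDP parameters `(C, P)`. -/
abbrev Param (S A : ℕ) := (Fin S → Fin A → ℝ) × (Fin S → Fin A → Fin S → ℝ)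

open Metric TopologicalSpace Set

/-- One-sided Hausdorff bound for the set-valued operator. -/
lemma image2_onesided {S A : ℕ}
    (M : Set (Param S A)) (h : (Fin S → ℝ) → Param S A → (Fin S → ℝ))
    (α : ℝ) (hα0 : 0 ≤ α)
    (hcontr : ∀ (V V' : Fin S → ℝ), ∀ m ∈ M, ‖h V m - h V' m‖ ≤ α * ‖V - V'‖)
    (𝒱 𝒲 : Set (Fin S → ℝ)) (h𝒲ne : 𝒲.Nonempty) (h𝒲cp : IsCompact 𝒲)
    (hed : EMetric.hausdorffEdist 𝒱 𝒲 ≠ ⊤) :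
    ∀ x ∈ Set.image2 h 𝒱 M, ∃ y ∈ Set.image2 h 𝒲 M,
      dist x y ≤ α * Metric.hausdorffDist 𝒱 𝒲 := by
  rintro x ⟨V, hV, m, hm, rfl⟩
  obtain ⟨W, hW, hWd⟩ := h𝒲cp.exists_infDist_eq_dist h𝒲ne V
  refine ⟨h W m, Set.mem_image2_of_mem hW hm, ?_⟩
  have h1 : dist (h V m) (h W m) ≤ α * dist V W := by
    rw [dist_eq_norm, dist_eq_norm]
    exact hcontr V W m hm
  have h2 : dist V W ≤ Metric.hausdorffDist 𝒱 𝒲 := by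
    rw [← hWd]
    exact Metric.infDist_le_hausdorffDist_of_mem hV hed
  calc dist (h V m) (h W m) ≤ α * dist V W := h1
    _ ≤ α * Metric.hausdorffDist 𝒱 𝒲 := by
        exact mul_le_mul_of_nonneg_left h2 hα0

theorem setValueOperator_contraction (S A : ℕ) (hS : 0 < S) (hA : 0 < A)
    (M : Set (Param S A)) (hMne : M.Nonempty) (hMcp : IsCompact M)
    (h : (Fin S → ℝ) → Param S A → (Fin S → ℝ))
    (α : ℝ) (hα0 : 0 ≤ α) (hα1 : α < 1)
    (hcontr : ∀ (V V' : Fin S → ℝ), ∀ m ∈ M, ‖h V m - h V' m‖ ≤ α * ‖V - V'‖)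
    (hmono : ∀ (V V' : Fin S → ℝ), ∀ m ∈ M, V ≤ V' → h V m ≤ h V' m)
    (hlip : ∀ V : Fin S → ℝ, ∃ K : ℝ, 0 ≤ K ∧
      ∀ m ∈ M, ∀ m' ∈ M, ‖h V m - h V m'‖ ≤ K * dist m m') :
    (∀ 𝒱 𝒲 : Set (Fin S → ℝ), 𝒱.Nonempty → IsCompact 𝒱 → 𝒲.Nonempty → IsCompact 𝒲 →
      Metric.hausdorffDist (Set.image2 h 𝒱 M) (Set.image2 h 𝒲 M)
        ≤ α * Metric.hausdorffDist 𝒱 𝒲) ∧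
    (∃! 𝒱star : Set (Fin S → ℝ),
      (𝒱star.Nonempty ∧ IsCompact 𝒱star) ∧ Set.image2 h 𝒱star M = 𝒱star) := by
  -- continuity of the uncurried map on univ ×ˢ M
  have hcont : ContinuousOn (fun p : (Fin S → ℝ) × Param S A => h p.1 p.2)
      (Set.univ ×ˢ M) := by
    rintro ⟨V₀, m₀⟩ ⟨-, hm₀⟩
    obtain ⟨K, hK0, hK⟩ := hlip V₀
    rw [Metric.continuousWithinAt_iff]
    intro ε hε
    refine ⟨ε / (α + K + 1), by positivity, ?_⟩
    rintro ⟨V, m⟩ ⟨-, hm⟩ hd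
    rw [Prod.dist_eq] at hd
    have hdV : dist V V₀ < ε / (α + K + 1) := (le_max_left _ _).trans_lt hd
    have hdm : dist m m₀ < ε / (α + K + 1) := (le_max_right _ _).trans_lt hd
    have h1 : dist (h V m) (h V₀ m₀) ≤ α * dist V V₀ + K * dist m m₀ := by
      calc dist (h V m) (h V₀ m₀)
          ≤ dist (h V m) (h V₀ m) + dist (h V₀ m) (h V₀ m₀) := dist_triangle _ _ _
        _ ≤ α * dist V V₀ + K * dist m m₀ := by
            gcongr
            · rw [dist_eq_norm, dist_eq_norm]; exact hcontr V V₀ m hm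
            · rw [dist_eq_norm]; exact hK m hm m₀ hm₀
    have : α * dist V V₀ + K * dist m m₀ < ε := by
      calc α * dist V V₀ + K * dist m m₀
          ≤ α * (ε / (α + K + 1)) + K * (ε / (α + K + 1)) :=
            add_le_add (mul_le_mul_of_nonneg_left hdV.le hα0)
              (mul_le_mul_of_nonneg_left hdm.le hK0)
        _ = (α + K) * (ε / (α + K + 1)) := by ring
        _ < (α + K + 1) * (ε / (α + K + 1)) := by
            have : (0:ℝ) < ε / (α + K + 1) := by positivity
            nlinarith
        _ = ε := by field_simp
    linarith [h1]
  -- contraction on Hausdorff distance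
  have Hcontr : ∀ 𝒱 𝒲 : Set (Fin S → ℝ), 𝒱.Nonempty → IsCompact 𝒱 →
      𝒲.Nonempty → IsCompact 𝒲 →
      Metric.hausdorffDist (Set.image2 h 𝒱 M) (Set.image2 h 𝒲 M)
        ≤ α * Metric.hausdorffDist 𝒱 𝒲 := by
    intro 𝒱 𝒲 h𝒱ne h𝒱cp h𝒲ne h𝒲cp
    have hed : EMetric.hausdorffEdist 𝒱 𝒲 ≠ ⊤ :=
      Metric.hausdorffEdist_ne_top_of_nonempty_of_bounded h𝒱ne h𝒲ne
        h𝒱cp.isBounded h𝒲cp.isBounded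
    have hed' : EMetric.hausdorffEdist 𝒲 𝒱 ≠ ⊤ := by
      exact fun h' => hed ((Metric.hausdorffEDist_comm : Metric.hausdorffEDist 𝒱 𝒲 = Metric.hausdorffEDist 𝒲 𝒱).trans h')
    refine Metric.hausdorffDist_le_of_mem_dist
      (mul_nonneg hα0 Metric.hausdorffDist_nonneg) ?_ ?_
    · exact image2_onesided M h α hα0 hcontr 𝒱 𝒲 h𝒲ne h𝒲cp hed
    · intro x hx
      obtain ⟨y, hy, hxy⟩ :=
        image2_onesided M h α hα0 hcontr 𝒲 𝒱 h𝒱ne h𝒱cp hed' x hx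
      exact ⟨y, hy, by rwa [Metric.hausdorffDist_comm] at hxy⟩
  refine ⟨Hcontr, ?_⟩
  -- Banach fixed point on NonemptyCompacts
  let F : NonemptyCompacts (Fin S → ℝ) → NonemptyCompacts (Fin S → ℝ) :=
    fun K => ⟨⟨Set.image2 h K M, by
      rw [← Set.image_prod]
      exact ((K.isCompact.prod hMcp).image_of_continuousOn
        (hcont.mono (Set.prod_mono (Set.subset_univ _) le_rfl)))⟩,
      K.nonempty.image2 hMne⟩
  have hFcarrier : ∀ K : NonemptyCompacts (Fin S → ℝ),
      (F K : Set (Fin S → ℝ)) = Set.image2 h K M := fun _ => rfl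
  have hFlip : LipschitzWith ⟨α, hα0⟩ F := by
    apply LipschitzWith.of_dist_le_mul
    intro K K'
    rw [NonemptyCompacts.dist_eq, NonemptyCompacts.dist_eq]
    exact Hcontr K K' K.nonempty K.isCompact K'.nonempty K'.isCompact
  have hFc : ContractingWith ⟨α, hα0⟩ F := ⟨by exact_mod_cast hα1, hFlip⟩
  haveI : Nonempty (NonemptyCompacts (Fin S → ℝ)) :=
    ⟨⟨⟨{0}, isCompact_singleton⟩, Set.singleton_nonempty 0⟩⟩
  let 𝒱star := ContractingWith.fixedPoint F hFc
  have hfix : F 𝒱star = 𝒱star := hFc.fixedPoint_isFixedPt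
  refine ⟨(𝒱star : Set (Fin S → ℝ)), ⟨⟨𝒱star.nonempty, 𝒱star.isCompact⟩, ?_⟩, ?_⟩
  · rw [← hFcarrier]; exact congrArg _ hfix
  · rintro 𝒲 ⟨⟨h𝒲ne, h𝒲cp⟩, h𝒲fix⟩
    let W : NonemptyCompacts (Fin S → ℝ) := ⟨⟨𝒲, h𝒲cp⟩, h𝒲ne⟩
    have hWfix : Function.IsFixedPt F W := by
      apply NonemptyCompacts.ext
      rw [hFcarrier]
      exact h𝒲fix
    have : W = 𝒱star := hFc.fixedPoint_unique hWfix
    rw [← this]; rfl
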